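/- Let p be a prime and let γ ∈ Sp_4(ℤ) with 2×2 integer blocks A, B, C, D, so γ = ((A, B), (C, D)). Suppose there exists τ ∈ ℍ₂⁺ with A·τ + B = τ·(C·τ + D), and there exists a matrix h ∈ Mat_4(ℚ_p) of rank strictly greater than 2 with γ·h = h (γ viewed in Mat_4(ℚ_p) via the canonical map ℤ → ℚ_p). Then γ = 1₄. -/

import Mathlib

open Matrix

/-- The standard symplectic form matrix `Ω = ((0, 1ₙ), (−1ₙ, 0))`. -/
def SpJ (R : Type*) [CommRing R] (n : ℕ) :
    Matrix (Fin n ⊕ Fin n) (Fin n ⊕ Fin n) R :=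
  fromBlocks 0 1 (-1) 0

lemma aux_posdef_kernel {It : Matrix (Fin 2) (Fin 2) ℝ} (hpos : It.PosDef)
    {x : Fin 2 → ℝ} (hx : It.mulVec x = 0) : x = 0 := by
  by_contra hne
  have h2 := hpos.dotProduct_mulVec_pos hne
  rw [hx] at h2
  simp at h2

lemma aux_imzero {It : Matrix (Fin 2) (Fin 2) ℝ} (hpos : It.PosDef)
    (σ : Matrix (Fin 2) (Fin 2) ℂ)
    (hσ : (∀ a b, (σ a b).im = It a b) ∨ (∀ a b, (σ a b).im = - It a b))
    (v : Fin 2 ⊕ Fin 2 → ℤ)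
    (hv : ∀ a, ((v (Sum.inl a) : ℂ)) = ∑ b, σ a b * (v (Sum.inr b) : ℂ)) :
    ∀ i, v i = 0 := by
  set x : Fin 2 → ℝ := fun b => (v (Sum.inr b) : ℝ) with hxdef
  have him : ∀ a, ∑ b, (σ a b).im * x b = 0 := by
    intro a
    have := congrArg Complex.im (hv a)
    simpa [Complex.im_sum, Complex.mul_im] using this.symm
  have hker : It.mulVec x = 0 := by
    funext a
    rcases hσ with hσ | hσ
    · have := him a
      simp only [hσ] at this
      simpa [Matrix.mulVec, dotProduct] using this
    · have := him a
      simp only [hσ] at this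
      have : ∑ b, It a b * x b = 0 := by
        have h' : ∑ b, -(It a b * x b) = 0 := by simpa [neg_mul] using this
        rw [Finset.sum_neg_distrib] at h'
        linarith
      simpa [Matrix.mulVec, dotProduct] using this
  have hx0 : x = 0 := aux_posdef_kernel hpos hker
  have hinr : ∀ b, v (Sum.inr b) = 0 := by
    intro b
    have : ((v (Sum.inr b) : ℝ)) = 0 := congrFun hx0 b
    exact_mod_cast this
  intro i
  rcases i with a | b
  · have := hv a
    simp [hinr] at this
    exact_mod_cast this
  · exact hinr b

lemma aux_rank_one {F : Type*} [Field F]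
    (S h : Matrix (Fin 2 ⊕ Fin 2) (Fin 2 ⊕ Fin 2) F)
    (hrank : 2 < h.rank) (hSh : S * h = 0) :
    ∀ i j k l, S i k * S j l = S i l * S j k := by
  have hcard : Fintype.card (Fin 2 ⊕ Fin 2) = 4 := by simp
  have hS1 : S.rank ≤ 1 := by
    have := Matrix.rank_add_rank_le_card_of_mul_eq_zero hSh
    rw [hcard] at this
    omega
  intro i j k l
  by_contra hne
  have hd : S i k * S j l - S i l * S j k ≠ 0 := sub_ne_zero.2 hne
  set u : (Fin 2 ⊕ Fin 2) → F := fun r => S r k with hu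
  set w : (Fin 2 ⊕ Fin 2) → F := fun r => S r l with hw
  have hli : LinearIndependent F ![u, w] := by
    rw [LinearIndependent.pair_iff]
    intro s t hst
    have h1 : s * S i k + t * S i l = 0 := by
      have := congrFun hst i; simpa [hu, hw] using this
    have h2 : s * S j k + t * S j l = 0 := by
      have := congrFun hst j; simpa [hu, hw] using this
    constructor
    · have e1 : s * (S i k * S j l - S i l * S j k)
          = S j l * (s * S i k + t * S i l) - S i l * (s * S j k + t * S j l) := by ring
      rw [h1, h2] at e1
      simp only [mul_zero, sub_zero] at e1
      exact (mul_eq_zero.1 e1).resolve_right hd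
    · have e2 : t * (S i k * S j l - S i l * S j k)
          = S i k * (s * S j k + t * S j l) - S j k * (s * S i k + t * S i l) := by ring
      rw [h1, h2] at e2
      simp only [mul_zero, sub_zero] at e2
      exact (mul_eq_zero.1 e2).resolve_right hd
  have hspan : Submodule.span F (Set.range ![u, w]) ≤ LinearMap.range S.mulVecLin := by
    rw [Submodule.span_le]
    rintro y ⟨t, rfl⟩
    fin_cases t
    · refine ⟨Pi.single k 1, ?_⟩
      simp only [Matrix.mulVecLin_apply, Matrix.mulVec_single_one]
      rfl
    · refine ⟨Pi.single l 1, ?_⟩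
      simp only [Matrix.mulVecLin_apply, Matrix.mulVec_single_one]
      rfl
  have h2le : 2 ≤ S.rank := by
    have hfr := finrank_span_eq_card hli
    simp only [Fintype.card_fin] at hfr
    have := Submodule.finrank_mono hspan
    rw [hfr] at this
    exact this
  omega

lemma aux_case (σ : Matrix (Fin 2) (Fin 2) ℂ) (m : Fin 2 → ℂ) (t s : ℂ)
    (ht : t ≠ 0) (hs : s ≠ 0) (v : Fin 2 ⊕ Fin 2 → ℂ)
    (eqi : ∀ a, t * m a = v (Sum.inr a) * s)
    (eqii : ∀ a, t * ∑ b, σ a b * m b = v (Sum.inl a) * s) :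
    ∀ a, v (Sum.inl a) = ∑ b, σ a b * v (Sum.inr b) := by
  have hm : ∀ b, m b = v (Sum.inr b) * s / t := by
    intro b
    rw [eq_div_iff ht, mul_comm]
    exact eqi b
  intro a
  apply mul_right_cancel₀ hs
  rw [← eqii a, Finset.mul_sum, Finset.sum_mul]
  apply Finset.sum_congr rfl
  intro b _
  rw [hm b]
  field_simp


/-- if `γ = ((A,B),(C,D)) ∈ Sp₄(ℤ)` fixes a point `τ` of the Siegel
upper half plane `ℍ₂⁺` (i.e. `Aτ + B = τ(Cτ + D)`) and fixes a matrix
`h ∈ Mat₄(ℚ_p)` of rank `> 2`, then `γ = 1`. -/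
theorem sp4_fixing_siegel_point_and_high_rank_is_one (p : ℕ) [Fact p.Prime]
    (A B C D : Matrix (Fin 2) (Fin 2) ℤ)
    (hγ : (fromBlocks A B C D)ᵀ * SpJ ℤ 2 * fromBlocks A B C D = SpJ ℤ 2)
    (τ : Matrix (Fin 2) (Fin 2) ℂ) (hτsymm : τᵀ = τ)
    (hτpos : (Matrix.of fun i j => (τ i j).im : Matrix (Fin 2) (Fin 2) ℝ).PosDef)
    (hfix : A.map (Int.cast : ℤ → ℂ) * τ + B.map (Int.cast : ℤ → ℂ)
      = τ * (C.map (Int.cast : ℤ → ℂ) * τ + D.map (Int.cast : ℤ → ℂ)))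
    (h : Matrix (Fin 2 ⊕ Fin 2) (Fin 2 ⊕ Fin 2) ℚ_[p])
    (hrank : 2 < h.rank)
    (hfixh : (fromBlocks A B C D).map (Int.cast : ℤ → ℚ_[p]) * h = h) :
    fromBlocks A B C D = 1 := by
  classical
  set G := fromBlocks A B C D with hG
  set S : Matrix (Fin 2 ⊕ Fin 2) (Fin 2 ⊕ Fin 2) ℤ := G - 1 with hSdef
  have hmapS : (G.map (Int.cast : ℤ → ℚ_[p])) - 1 = S.map (Int.cast : ℤ → ℚ_[p]) := by
    ext i j
    by_cases hij : i = j <;>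
      simp [hSdef, Matrix.one_apply, Matrix.map_apply, Matrix.sub_apply, hij]
  have hSh : S.map (Int.cast : ℤ → ℚ_[p]) * h = 0 := by
    rw [← hmapS, Matrix.sub_mul, hfixh, Matrix.one_mul, sub_self]
  have hm : ∀ i j k l, S i k * S j l = S i l * S j k := by
    intro i j k l
    have h1 := aux_rank_one (S.map (Int.cast : ℤ → ℚ_[p])) h hrank hSh i j k l
    simp only [Matrix.map_apply] at h1
    exact_mod_cast h1
  by_contra hne
  obtain ⟨i₀, j₀, hij⟩ : ∃ i j, S i j ≠ 0 := by
    by_contra hall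
    push_neg at hall
    exact hne (sub_eq_zero.1 (by ext i j; exact hall i j))
  set τ' : Matrix (Fin 2) (Fin 2) ℂ := τ.map (starRingEnd ℂ) with hτ'
  have hmapconj : ∀ (X : Matrix (Fin 2) (Fin 2) ℤ),
      (X.map (Int.cast : ℤ → ℂ)).map (starRingEnd ℂ) = X.map (Int.cast : ℤ → ℂ) := by
    intro X; ext i j; simp [Matrix.map_apply]
  have hfix' : A.map (Int.cast : ℤ → ℂ) * τ' + B.map (Int.cast : ℤ → ℂ)
      = τ' * (C.map (Int.cast : ℤ → ℂ) * τ' + D.map (Int.cast : ℤ → ℂ)) := by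
    have h2 := congrArg (fun (X : Matrix (Fin 2) (Fin 2) ℂ) => (starRingEnd ℂ).mapMatrix X) hfix
    simp only [map_add, _root_.map_mul] at h2
    simp only [RingHom.mapMatrix_apply] at h2
    simp only [hmapconj] at h2
    rw [hτ']
    exact h2
  set M₁ : Matrix (Fin 2) (Fin 2) ℂ :=
    C.map (Int.cast : ℤ → ℂ) * τ + D.map (Int.cast : ℤ → ℂ) with hM₁
  set M₂ : Matrix (Fin 2) (Fin 2) ℂ :=
    C.map (Int.cast : ℤ → ℂ) * τ' + D.map (Int.cast : ℤ → ℂ) with hM₂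
  set Q : Matrix (Fin 2 ⊕ Fin 2) (Fin 2 ⊕ Fin 2) ℂ := fromBlocks τ τ' 1 1 with hQ
  have hγQ : G.map (Int.cast : ℤ → ℂ) * Q = Q * fromBlocks M₁ 0 0 M₂ := by
    rw [hG, Matrix.fromBlocks_map, hQ, Matrix.fromBlocks_multiply, Matrix.fromBlocks_multiply]
    have e11 : A.map (Int.cast : ℤ → ℂ) * τ + B.map (Int.cast : ℤ → ℂ) * 1
        = τ * M₁ + τ' * 0 := by
      simp only [Matrix.mul_one, Matrix.mul_zero, Matrix.one_mul, add_zero, zero_add]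
      exact hfix
    have e12 : A.map (Int.cast : ℤ → ℂ) * τ' + B.map (Int.cast : ℤ → ℂ) * 1
        = τ * 0 + τ' * M₂ := by
      simp only [Matrix.mul_one, Matrix.mul_zero, Matrix.one_mul, add_zero, zero_add]
      exact hfix'
    have e21 : C.map (Int.cast : ℤ → ℂ) * τ + D.map (Int.cast : ℤ → ℂ) * 1
        = 1 * M₁ + 1 * 0 := by
      simp only [Matrix.mul_one, Matrix.mul_zero, Matrix.one_mul, add_zero, zero_add]
      rfl
    have e22 : C.map (Int.cast : ℤ → ℂ) * τ' + D.map (Int.cast : ℤ → ℂ) * 1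
        = 1 * 0 + 1 * M₂ := by
      simp only [Matrix.mul_one, Matrix.mul_zero, Matrix.one_mul, add_zero, zero_add]
      rfl
    rw [e11, e12, e21, e22]
  set Δ : Matrix (Fin 2) (Fin 2) ℂ := τ - τ' with hΔ
  have hΔeq : Δ = ((2 : ℂ) * Complex.I) •
      ((Matrix.of fun i j => (τ i j).im : Matrix (Fin 2) (Fin 2) ℝ).map (Complex.ofReal)) := by
    ext i j
    simp only [hΔ, Matrix.sub_apply, hτ', Matrix.map_apply, Matrix.smul_apply, Matrix.of_apply,
      smul_eq_mul]
    rw [Complex.sub_conj]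
    push_cast
    ring
  have hdet : IsUnit Δ.det := by
    rw [hΔeq, Matrix.det_smul]
    have hmapdet : ((Matrix.of fun i j => (τ i j).im : Matrix (Fin 2) (Fin 2) ℝ).map
        (Complex.ofReal)).det
        = (((Matrix.of fun i j => (τ i j).im : Matrix (Fin 2) (Fin 2) ℝ).det : ℝ) : ℂ) := by
      simp [Matrix.det_fin_two, Matrix.map_apply]
    rw [hmapdet, isUnit_iff_ne_zero]
    apply mul_ne_zero
    · apply pow_ne_zero
      simp [Complex.I_ne_zero]
    · exact_mod_cast hτpos.det_pos.ne'
  set R : Matrix (Fin 2 ⊕ Fin 2) (Fin 2 ⊕ Fin 2) ℂ :=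
    fromBlocks Δ⁻¹ (-(Δ⁻¹ * τ')) (-Δ⁻¹) (1 + Δ⁻¹ * τ') with hR
  have hQR : Q * R = 1 := by
    rw [hQ, hR, Matrix.fromBlocks_multiply, ← Matrix.fromBlocks_one]
    have hΔ1 : Δ * Δ⁻¹ = 1 := Matrix.mul_nonsing_inv _ hdet
    have f11 : τ * Δ⁻¹ + τ' * -Δ⁻¹ = 1 := by
      calc τ * Δ⁻¹ + τ' * -Δ⁻¹ = (τ - τ') * Δ⁻¹ := by noncomm_ring
        _ = 1 := by rw [← hΔ, hΔ1]
    have f12 : τ * -(Δ⁻¹ * τ') + τ' * (1 + Δ⁻¹ * τ') = 0 := by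
      have h1 : (τ - τ') * (Δ⁻¹ * τ') = τ' := by
        rw [← hΔ, ← Matrix.mul_assoc, hΔ1, Matrix.one_mul]
      calc τ * -(Δ⁻¹ * τ') + τ' * (1 + Δ⁻¹ * τ')
          = τ' - (τ - τ') * (Δ⁻¹ * τ') := by noncomm_ring
        _ = 0 := by rw [h1, sub_self]
    have f21 : (1 : Matrix (Fin 2) (Fin 2) ℂ) * Δ⁻¹ + 1 * -Δ⁻¹ = 0 := by noncomm_ring
    have f22 : (1 : Matrix (Fin 2) (Fin 2) ℂ) * -(Δ⁻¹ * τ') + 1 * (1 + Δ⁻¹ * τ') = 1 := by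
      noncomm_ring
    rw [f11, f12, f21, f22]
  set Sc : Matrix (Fin 2 ⊕ Fin 2) (Fin 2 ⊕ Fin 2) ℂ := G.map (Int.cast : ℤ → ℂ) - 1 with hSc
  have hScc : ∀ i j, Sc i j = ((S i j : ℤ) : ℂ) := by
    intro i j
    by_cases hij' : i = j <;>
      simp [hSc, hSdef, Matrix.one_apply, Matrix.map_apply, Matrix.sub_apply, hij']
  set N : Matrix (Fin 2 ⊕ Fin 2) (Fin 2 ⊕ Fin 2) ℂ :=
    fromBlocks (M₁ - 1) 0 0 (M₂ - 1) with hN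
  have hScQ : Sc * Q = Q * N := by
    have hN' : fromBlocks M₁ 0 0 M₂ - 1 = N := by
      rw [hN, ← Matrix.fromBlocks_one]
      ext i j
      rcases i with a | a <;> rcases j with b | b <;> simp [Matrix.fromBlocks]
    rw [hSc, Matrix.sub_mul, hγQ, Matrix.one_mul, ← hN', Matrix.mul_sub, Matrix.mul_one]
  have hxc : ∃ c, (Sc * Q) i₀ c ≠ 0 := by
    by_contra hall
    push_neg at hall
    have h0 : Sc i₀ j₀ = 0 := by
      have hSQ : Sc * Q * R = Sc := by rw [Matrix.mul_assoc, hQR, Matrix.mul_one]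
      calc Sc i₀ j₀ = (Sc * Q * R) i₀ j₀ := by rw [hSQ]
        _ = ∑ c, (Sc * Q) i₀ c * R c j₀ := by rw [Matrix.mul_apply]
        _ = 0 := by simp [hall]
    rw [hScc] at h0
    exact hij (by exact_mod_cast h0)
  obtain ⟨c, hc⟩ := hxc
  have hmC : ∀ i j k l, Sc i k * Sc j l = Sc i l * Sc j k := by
    intro i j k l
    rw [hScc, hScc, hScc, hScc]
    exact_mod_cast hm i j k l
  have hkey : ∀ i, Sc i₀ j₀ * (Sc * Q) i c = Sc i j₀ * (Sc * Q) i₀ c := by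
    intro i
    rw [Matrix.mul_apply, Matrix.mul_apply, Finset.mul_sum, Finset.mul_sum]
    apply Finset.sum_congr rfl
    intro j _
    rw [← mul_assoc, hmC i₀ i j₀ j, mul_comm (Sc i₀ j) (Sc i j₀), mul_assoc]
  have ht : Sc i₀ j₀ ≠ 0 := by
    rw [hScc]
    exact_mod_cast hij
  have hc' : (Q * N) i₀ c ≠ 0 := by rw [← hScQ]; exact hc
  have hkey' : ∀ i, Sc i₀ j₀ * (Q * N) i c = ((S i j₀ : ℤ) : ℂ) * ((Q * N) i₀ c) := by
    intro i
    rw [← hScQ, ← hScc]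
    exact hkey i
  rcases c with k | k
  · have hQN1 : ∀ a, (Q * N) (Sum.inr a) (Sum.inl k) = (M₁ - 1) a k := by
      intro a
      rw [Matrix.mul_apply, Fintype.sum_sum_type]
      simp [hQ, hN, Matrix.one_apply]
    have hQN2 : ∀ a, (Q * N) (Sum.inl a) (Sum.inl k) = ∑ b, τ a b * (M₁ - 1) b k := by
      intro a
      rw [Matrix.mul_apply, Fintype.sum_sum_type]
      simp [hQ, hN]
    have eqi : ∀ a, Sc i₀ j₀ * (M₁ - 1) a k
        = ((S (Sum.inr a) j₀ : ℤ) : ℂ) * ((Q * N) i₀ (Sum.inl k)) := by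
      intro a; rw [← hQN1 a]; exact hkey' (Sum.inr a)
    have eqii : ∀ a, Sc i₀ j₀ * ∑ b, τ a b * (M₁ - 1) b k
        = ((S (Sum.inl a) j₀ : ℤ) : ℂ) * ((Q * N) i₀ (Sum.inl k)) := by
      intro a; rw [← hQN2 a]; exact hkey' (Sum.inl a)
    have hv := aux_case τ (fun b => (M₁ - 1) b k) (Sc i₀ j₀) ((Q * N) i₀ (Sum.inl k)) ht hc'
      (fun i => ((S i j₀ : ℤ) : ℂ)) eqi eqii
    have h0 := aux_imzero hτpos τ (Or.inl fun a b => rfl) (fun i => S i j₀) hv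
    exact hij (h0 i₀)
  · have hQN1 : ∀ a, (Q * N) (Sum.inr a) (Sum.inr k) = (M₂ - 1) a k := by
      intro a
      rw [Matrix.mul_apply, Fintype.sum_sum_type]
      simp [hQ, hN, Matrix.one_apply]
    have hQN2 : ∀ a, (Q * N) (Sum.inl a) (Sum.inr k) = ∑ b, τ' a b * (M₂ - 1) b k := by
      intro a
      rw [Matrix.mul_apply, Fintype.sum_sum_type]
      simp [hQ, hN]
    have eqi : ∀ a, Sc i₀ j₀ * (M₂ - 1) a k
        = ((S (Sum.inr a) j₀ : ℤ) : ℂ) * ((Q * N) i₀ (Sum.inr k)) := by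
      intro a; rw [← hQN1 a]; exact hkey' (Sum.inr a)
    have eqii : ∀ a, Sc i₀ j₀ * ∑ b, τ' a b * (M₂ - 1) b k
        = ((S (Sum.inl a) j₀ : ℤ) : ℂ) * ((Q * N) i₀ (Sum.inr k)) := by
      intro a; rw [← hQN2 a]; exact hkey' (Sum.inl a)
    have hv := aux_case τ' (fun b => (M₂ - 1) b k) (Sc i₀ j₀) ((Q * N) i₀ (Sum.inr k)) ht hc'
      (fun i => ((S i j₀ : ℤ) : ℂ)) eqi eqii
    have h0 := aux_imzero hτpos τ' (Or.inr fun a b => by simp [hτ', Matrix.map_apply])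
      (fun i => S i j₀) hv
    exact hij (h0 i₀)
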